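/- Let λ ⊢ n, S a standard Young tableau of shape λ, and T a bijective filling of λ by 1,…,n. Then (1/s_T^S)·Σ_{τ∈R(T)} τ·p_T^S is a sum of pairwise distinct monomials, each occurring with coefficient exactly 1, all homogeneous of degree cc(S) and having the same multiset of exponents as p_T^S; the monomial p_T^S is among them; and no other monomial in this sum lies in the C(T)-orbit of p_T^S. -/

import Mathlib

open MvPolynomial

noncomputable section

namespace HigherSpecht

open scoped Classical

/-- A tableau: a filling of the plane (row, column), `0`-indexed, with `0` outside the diagram. -/
abbrev Tab := ℕ × ℕ → ℕ

/-- A permutation of `ℕ` represents an element of `Sₙ` (acting on `{1, …, n}`)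
when it fixes `0` and everything above `n`. -/
def SuppIn (n : ℕ) (w : Equiv.Perm ℕ) : Prop := ∀ i, i = 0 ∨ n < i → w i = i

/-- Descending locations of a permutation (one-line notation `w 1, …, w n`). -/
def DslSet (n : ℕ) (w : Equiv.Perm ℕ) : Finset ℕ :=
  (Finset.Ioo 0 n).filter fun i => w (i + 1) < w i

/-- Ascending locations of a permutation. -/
def AslSet (n : ℕ) (w : Equiv.Perm ℕ) : Finset ℕ :=
  (Finset.Ioo 0 n).filter fun i => w i < w (i + 1)

/-- The row in which the entry `i` shows up in a tableau. -/
def rowIdx (T : Tab) (i : ℕ) : ℕ := sInf {r | ∃ c, T (r, c) = i}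

/-- The column in which the entry `i` shows up in a tableau. -/
def colIdx (T : Tab) (i : ℕ) : ℕ := sInf {c | T (rowIdx T i, c) = i}

/-- The box containing the entry `i`. -/
def posOf (T : Tab) (i : ℕ) : ℕ × ℕ := (rowIdx T i, colIdx T i)

/-- Descending indices of a (standard) tableau: `i` with the row of `i+1` strictly below
the row of `i`. -/
def DsiSet (n : ℕ) (T : Tab) : Finset ℕ :=
  (Finset.Ioo 0 n).filter fun i => rowIdx T i < rowIdx T (i + 1)

/-- `Dsi^c`, the complemented descent set `{n - i | i ∈ Dsi}`. -/
def Dsic (n : ℕ) (T : Tab) : Finset ℕ := (DsiSet n T).image fun i => n - i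

/-- The entry of `ct_J(S)` at a box `c`: the number of elements of `J` smaller than the
entry of `S` at `c`. -/
def ctEntry (T : Tab) (J : Finset ℕ) (c : ℕ × ℕ) : ℕ := (J.filter fun j => j < T c).card

/-- The cocharge tableau `ct(S)` of a standard tableau. -/
def ctTab (n : ℕ) (T : Tab) : Tab := fun c => ctEntry T (DsiSet n T) c

/-- The (total) cocharge `cc(S)`: the sum of the entries of `ct(S)`. -/
def ccStat (n : ℕ) (T : Tab) : ℕ :=
  ∑ i ∈ Finset.Icc 1 n, ctEntry T (DsiSet n T) (posOf T i)

/-- `T` is a bijective filling of the given set of cells by `1, …, n` (`n` the number of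
cells), with `0` outside. -/
def IsFillingF (cells : Finset (ℕ × ℕ)) (T : Tab) : Prop :=
  (∀ c, c ∉ cells → T c = 0) ∧ Set.BijOn T ↑cells (Set.Icc 1 cells.card)

/-- A bijective filling of a Young diagram. -/
def IsFilling (μ : YoungDiagram) (T : Tab) : Prop := IsFillingF μ.cells T

/-- A standard Young tableau of shape `μ`: entries strictly increase along rows and columns. -/
def IsStandard (μ : YoungDiagram) (T : Tab) : Prop :=
  IsFilling μ T ∧ ∀ c₁ ∈ μ.cells, ∀ c₂ ∈ μ.cells,
    c₁ ≠ c₂ → c₁.1 ≤ c₂.1 → c₁.2 ≤ c₂.2 → T c₁ < T c₂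

/-! ### Robinson–Schensted -/

/-- Row insertion: insert `x` into a row, returning the new row and the bumped entry. -/
def rowInsert : ℕ → List ℕ → List ℕ × Option ℕ
  | x, [] => ([x], none)
  | x, y :: ys =>
    if x < y then (x :: ys, some y)
    else
      let p := rowInsert x ys
      (y :: p.1, p.2)

/-- Insertion of an entry into a tableau, given as a list of rows. -/
def tabInsert : List (List ℕ) → ℕ → List (List ℕ)
  | [], x => [[x]]
  | r :: rs, x =>
    match rowInsert x r with
    | (r', none) => r' :: rs
    | (r', some y) => r' :: tabInsert rs y

/-- One-line notation of `w ∈ Sₙ`. -/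
def oneLine (n : ℕ) (w : Equiv.Perm ℕ) : List ℕ := (List.range n).map fun i => w (i + 1)

/-- The insertion tableau of the first `m` letters of `w`, as a list of rows. -/
def PtabListPart (n : ℕ) (w : Equiv.Perm ℕ) (m : ℕ) : List (List ℕ) :=
  ((oneLine n w).take m).foldl tabInsert []

/-- Entry of a list-of-rows tableau at a (0-indexed) cell. -/
def listEntry (t : List (List ℕ)) (c : ℕ × ℕ) : ℕ := (t.getD c.1 []).getD c.2 0

/-- The Robinson–Schensted insertion tableau `P(w)`. -/
def Ptab (n : ℕ) (w : Equiv.Perm ℕ) : Tab := fun c => listEntry (PtabListPart n w n) c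

/-- The Robinson–Schensted recording tableau `Q(w)`: the entry of a cell is the step at
which the cell is added to the shape. -/
def Qtab (n : ℕ) (w : Equiv.Perm ℕ) : Tab := fun c =>
  sInf {m | listEntry (PtabListPart n w m) c ≠ 0}

/-! ### Schützenberger evacuation -/

/-- One step of a jeu de taquin slide into the hole at `c`. -/
def slideOnce (T : Tab) (c : ℕ × ℕ) : Tab × (ℕ × ℕ) :=
  let rc : ℕ × ℕ := (c.1, c.2 + 1)
  let dc : ℕ × ℕ := (c.1 + 1, c.2)
  if T rc = 0 ∧ T dc = 0 then (T, c)
  else if T dc = 0 ∨ (T rc ≠ 0 ∧ T rc < T dc) then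
    (Function.update (Function.update T c (T rc)) rc 0, rc)
  else
    (Function.update (Function.update T c (T dc)) dc 0, dc)

/-- Jeu de taquin slide (with fuel). -/
def slide : ℕ → Tab → ℕ × ℕ → Tab × (ℕ × ℕ)
  | 0, T, c => (T, c)
  | k + 1, T, c =>
    let p := slideOnce T c
    if p.2 = c then (T, c) else slide k p.1 p.2

/-- The Schützenberger evacuation: repeatedly delete the minimal entry, slide into the hole,
decrement the remaining entries, and record the vacated cell. -/
def evacAux : ℕ → Tab → Tab
  | 0, _ => fun _ => 0
  | m + 1, T =>
    let c0 := posOf T 1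
    let p := slide (m + 1) (Function.update T c0 0) c0
    Function.update (evacAux m fun c => p.1 c - 1) p.2 (m + 1)

/-- The evacuation tableau `ev S` of a standard tableau with `n` boxes. -/
def evac (n : ℕ) (T : Tab) : Tab := evacAux n T

/-- `Q̃(w) := ev (Q w)`. -/
def Qt (n : ℕ) (w : Equiv.Perm ℕ) : Tab := evac n (Qtab n w)

/-! ### Row and column groups, higher Specht polynomials -/

/-- The identification of `Fin n` with `{1, …, n} ⊆ ℕ`. -/
def finShift (n : ℕ) : Fin n ≃ {i : ℕ // 1 ≤ i ∧ i ≤ n} where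
  toFun j := ⟨(j : ℕ) + 1, by have := j.isLt; omega⟩
  invFun i := ⟨(i : ℕ) - 1, by have := i.2; omega⟩
  left_inv j := by apply Fin.ext; simp
  right_inv i := by apply Subtype.ext; have := i.2; simp; omega

/-- Embedding of the permutations of `Fin n` into permutations of `ℕ` (acting on `{1, …, n}`). -/
def embedPerm (n : ℕ) (σ : Equiv.Perm (Fin n)) : Equiv.Perm ℕ :=
  σ.extendDomain (finShift n)

/-- The row group `R(T)` of a filling, as a finset of permutations of `Fin n`. -/
def rowFinset (n : ℕ) (T : Tab) : Finset (Equiv.Perm (Fin n)) :=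
  Finset.univ.filter fun τ => ∀ i ∈ Finset.Icc 1 n, rowIdx T (embedPerm n τ i) = rowIdx T i

/-- The column group `C(T)` of a filling, as a finset of permutations of `Fin n`. -/
def colFinset (n : ℕ) (T : Tab) : Finset (Equiv.Perm (Fin n)) :=
  Finset.univ.filter fun σ => ∀ i ∈ Finset.Icc 1 n, colIdx T (embedPerm n σ i) = colIdx T i

/-- The row group `R(T)` as a set of permutations of `ℕ`. -/
def rowGroupSet (n : ℕ) (T : Tab) : Set (Equiv.Perm ℕ) :=
  {w | SuppIn n w ∧ ∀ i ∈ Finset.Icc 1 n, rowIdx T (w i) = rowIdx T i}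

/-- The column group `C(T)` as a set of permutations of `ℕ`. -/
def colGroupSet (n : ℕ) (T : Tab) : Set (Equiv.Perm ℕ) :=
  {w | SuppIn n w ∧ ∀ i ∈ Finset.Icc 1 n, colIdx T (w i) = colIdx T i}

/-- The Young symmetrizer `ε_T = Σ_{σ ∈ C(T)} Σ_{τ ∈ R(T)} sgn(σ) σ τ` acting on polynomials
(permutations acting by permuting the variables). -/
def epsAct (n : ℕ) (T : Tab) (p : MvPolynomial ℕ ℚ) : MvPolynomial ℕ ℚ :=
  ∑ σ ∈ colFinset n T, ∑ τ ∈ rowFinset n T,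
    (Equiv.Perm.sign σ : ℤ) • rename (⇑(embedPerm n σ * embedPerm n τ)) p

/-- The monomial `p_T^S = Π_i x_i^{h_i}`, where `h_i` is the entry of `ct S` in the box of
`T` containing `i`. -/
def pTS (n : ℕ) (T S : Tab) : MvPolynomial ℕ ℚ :=
  ∏ i ∈ Finset.Icc 1 n, X i ^ ctEntry S (DsiSet n S) (posOf T i)

/-- `s_T^S`: the order of the stabilizer of `p_T^S` in `R(T)`. -/
def sTS (n : ℕ) (T S : Tab) : ℕ :=
  ((rowFinset n T).filter fun τ =>
    rename (⇑(embedPerm n τ)) (pTS n T S) = pTS n T S).card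

/-- The higher Specht polynomial `F_T^S := ε_T p_T^S / s_T^S`. -/
def FTS (n : ℕ) (T S : Tab) : MvPolynomial ℕ ℚ :=
  ((sTS n T S : ℚ)⁻¹) • epsAct n T (pTS n T S)

/-- The higher Specht polynomial `F_w := F_{P(w)}^{Q̃(w)}` of a permutation. -/
def Fw (n : ℕ) (w : Equiv.Perm ℕ) : MvPolynomial ℕ ℚ := FTS n (Ptab n w) (Qt n w)

/-- The elementary symmetric polynomial `e_r` in the variables `x_1, …, x_n`. -/
def esym (n r : ℕ) : MvPolynomial ℕ ℚ :=
  ∑ s ∈ (Finset.Icc 1 n).powersetCard r, ∏ i ∈ s, X i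

/-- The representation `V^S`: the span of the higher Specht polynomials `F_T^S` over all
bijective fillings `T` of the given cells. -/
def VS (n : ℕ) (cells : Finset (ℕ × ℕ)) (S : Tab) : Submodule ℚ (MvPolynomial ℕ ℚ) :=
  Submodule.span ℚ {p | ∃ T : Tab, IsFillingF cells T ∧ p = FTS n T S}

/-- Multiplication of a subspace of polynomials by a fixed polynomial. -/
def polyMul (q : MvPolynomial ℕ ℚ) (V : Submodule ℚ (MvPolynomial ℕ ℚ)) :
    Submodule ℚ (MvPolynomial ℕ ℚ) :=
  Submodule.map (LinearMap.mulLeft ℚ q) V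

/-- The symmetric multiplier `Π_r e_r^{h_r}`. -/
def eProd (n : ℕ) (h : ℕ → ℕ) : MvPolynomial ℕ ℚ := ∏ r ∈ Finset.Icc 1 n, esym n r ^ h r

/-- `V^S_h := (Π_r e_r^{h_r}) V^S`. -/
def VSh (n : ℕ) (cells : Finset (ℕ × ℕ)) (S : Tab) (h : ℕ → ℕ) :
    Submodule ℚ (MvPolynomial ℕ ℚ) :=
  polyMul (eProd n h) (VS n cells S)

/-! ### The representations `R_{n,I}` -/

/-- For `i ∈ I`, `r_i := #{j ∈ {1,…,n-1} \ I : j < i}`. -/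
def rIdxI (n : ℕ) (I : Finset ℕ) (i : ℕ) : ℕ :=
  ((Finset.Ioo 0 n \ I).filter fun j => j < i).card

/-- The vector `h^S_I`, whose `r`-th entry (for `r ≥ 1`) is `#{i ∈ I \ Dsi^c(S) : r_i = r}`. -/
def hSI (n : ℕ) (I : Finset ℕ) (S : Tab) : ℕ → ℕ := fun r =>
  if 1 ≤ r then ((I \ Dsic n S).filter fun i => rIdxI n I i = r).card else 0

/-- The indicator vector `h(I,S)` of the set `I \ Dsi^c(S)`. -/
def hInd (n : ℕ) (I : Finset ℕ) (S : Tab) : ℕ → ℕ := fun r =>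
  if r ∈ I \ Dsic n S then 1 else 0

/-- `F_{w,I} := F_w · Π_{i ∈ I \ Dsl(w)} e_{r_i}`. -/
def FwI (n : ℕ) (I : Finset ℕ) (w : Equiv.Perm ℕ) : MvPolynomial ℕ ℚ :=
  Fw n w * ∏ i ∈ I \ DslSet n w, esym n (rIdxI n I i)

/-- The homogeneous version `F^hom_{w,I} := F_w · Π_{i ∈ I \ Dsl(w)} e_i`. -/
def FwIhom (n : ℕ) (I : Finset ℕ) (w : Equiv.Perm ℕ) : MvPolynomial ℕ ℚ :=
  Fw n w * ∏ i ∈ I \ DslSet n w, esym n i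

/-- The representation `R_{n,I}`: span of the `F_{w,I}` over `w` with `Dsl(w) ⊆ I`. -/
def RnI (n : ℕ) (I : Finset ℕ) : Submodule ℚ (MvPolynomial ℕ ℚ) :=
  Submodule.span ℚ {p | ∃ w : Equiv.Perm ℕ, SuppIn n w ∧ DslSet n w ⊆ I ∧ p = FwI n I w}

/-- The homogeneous representation `R^hom_{n,I}`. -/
def RnIhom (n : ℕ) (I : Finset ℕ) : Submodule ℚ (MvPolynomial ℕ ℚ) :=
  Submodule.span ℚ {p | ∃ w : Equiv.Perm ℕ, SuppIn n w ∧ DslSet n w ⊆ I ∧ p = FwIhom n I w}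

/-- The index type for the decomposition of `R_{n,I}`: pairs of a partition `λ ⊢ n` and a
standard Young tableau `S` of shape `λ` with `Dsi^c(S) ⊆ I`. -/
def SIdx (n : ℕ) (I : Finset ℕ) : Type :=
  {q : YoungDiagram × Tab // q.1.cells.card = n ∧ IsStandard q.1 q.2 ∧ Dsic n q.2 ⊆ I}

/-! ### Ordered set partitions -/

/-- The cumulative values `j_h` attached to a subset `I ⊆ {1,…,n-1}` (`j_0 = 0`,
`j_h` the `h`-th smallest element, `j_{|I|+1} = n`). -/
def jval (n : ℕ) (I : Finset ℕ) (h : ℕ) : ℕ :=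
  if h = 0 then 0 else if h ≤ I.card then (I.sort (· ≤ ·)).getD (h - 1) 0 else n

/-- The composition `comp_n I`, as a function of the index `0 ≤ h ≤ |I|`. -/
def compFun (n : ℕ) (I : Finset ℕ) (h : ℕ) : ℕ := jval n I (h + 1) - jval n I h

/-- The set `OP_{n,I}` of ordered set partitions of `{1,…,n}` into `|I| + 1` blocks whose
sizes are given by `comp_n I` (blocks indexed by `ℕ`, empty from index `|I| + 1` on). -/
def OPset (n : ℕ) (I : Finset ℕ) : Set (ℕ → Finset ℕ) :=
  {B | (∀ h, I.card + 1 ≤ h → B h = ∅) ∧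
       (∀ h₁ h₂, h₁ ≠ h₂ → Disjoint (B h₁) (B h₂)) ∧
       (∀ h ≤ I.card, (B h).card = compFun n I h) ∧
       Finset.Icc 1 n = (Finset.range (I.card + 1)).biUnion B}

/-- The natural action of a permutation on an ordered set partition. -/
def permOP (w : Equiv.Perm ℕ) (B : ℕ → Finset ℕ) : ℕ → Finset ℕ := fun h => (B h).image w

/-! ### The quotient `R_{n,k}` -/

/-- Elementary symmetric polynomials in `Fin n` variables. -/
def esymFin (n r : ℕ) : MvPolynomial (Fin n) ℚ :=
  ∑ s ∈ (Finset.univ : Finset (Fin n)).powersetCard r, ∏ i ∈ s, X i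

/-- The ideal defining `R_{n,k}`: generated by `x_i^k` and `e_r`, `n-k+1 ≤ r ≤ n`. -/
def Jnk (n k : ℕ) : Ideal (MvPolynomial (Fin n) ℚ) :=
  Ideal.span ((Set.range fun i : Fin n => (X i : MvPolynomial (Fin n) ℚ) ^ k) ∪
    {p | ∃ r, n - k + 1 ≤ r ∧ r ≤ n ∧ p = esymFin n r})

/-- The map sending `x_i` (for `1 ≤ i ≤ n`) to the corresponding variable of
`ℚ[x_1, …, x_n]`, and all other variables to `0`. -/
def toFin (n : ℕ) : MvPolynomial ℕ ℚ →ₐ[ℚ] MvPolynomial (Fin n) ℚ :=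
  aeval fun i => if h : 1 ≤ i ∧ i ≤ n then X (⟨i - 1, by omega⟩ : Fin n) else 0

/-- The quotient projection onto `R_{n,k}`. -/
def projNK (n k : ℕ) : MvPolynomial ℕ ℚ →ₐ[ℚ] (MvPolynomial (Fin n) ℚ ⧸ Jnk n k) :=
  (Ideal.Quotient.mkₐ ℚ (Jnk n k)).comp (toFin n)

/-! ### Corners, insertions and the induction/extension operators -/

/-- `v` is an external corner of `μ`. -/
def IsCorner (μ : YoungDiagram) (v : ℕ × ℕ) : Prop :=
  v ∉ μ.cells ∧ ∃ ν : YoungDiagram, ν.cells = insert v μ.cells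

/-- `S +̃ v := ev (ev S + v)`, where `+ v` places the entry `n + 1` in the box `v`. -/
def Sadd (n : ℕ) (S : Tab) (v : ℕ × ℕ) : Tab :=
  evac (n + 1) (Function.update (evac n S) v (n + 1))

/-- `δ^{S,v}`: `0` if `v` lies strictly below the row of `n` in `ev S`, and `1` otherwise. -/
def deltaSV (n : ℕ) (S : Tab) (v : ℕ × ℕ) : ℕ :=
  if rowIdx (evac n S) n < v.1 then 0 else 1

/-- `h + δ·1_t`: add `δ` to the coordinate `t` of `h` when `t ≥ 1`; do nothing for `t = 0`. -/
def addAt (h : ℕ → ℕ) (t δ : ℕ) : ℕ → ℕ := fun r =>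
  if r = t ∧ 1 ≤ t then h r + δ else h r

/-- The induction operator on a single summand:
`Ind_t V^S_h := ⊕_{v ∈ EC(λ)} V^{S +̃ v}_{h + δ^{S,v}·1_t}`. -/
def IndVSh (t n : ℕ) (μ : YoungDiagram) (S : Tab) (h : ℕ → ℕ) :
    Submodule ℚ (MvPolynomial ℕ ℚ) :=
  ⨆ v : ℕ × ℕ, ⨆ _ : IsCorner μ v,
    VSh (n + 1) (insert v μ.cells) (Sadd n S v) (addAt h t (deltaSV n S v))

/-- The extension operator on a single summand:
`Ext V^S_h := ⊕_{v ∈ EC(λ), δ^{S,v} = 1} V^{S +̃ v}_h`. -/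
def ExtVSh (n : ℕ) (μ : YoungDiagram) (S : Tab) (h : ℕ → ℕ) :
    Submodule ℚ (MvPolynomial ℕ ℚ) :=
  ⨆ v : ℕ × ℕ, ⨆ _ : IsCorner μ v ∧ deltaSV n S v = 1,
    VSh (n + 1) (insert v μ.cells) (Sadd n S v) h

/-- `Ind_t R_{n,I}`, applied summand-by-summand to the decomposition of `R_{n,I}`. -/
def IndR (t n : ℕ) (I : Finset ℕ) : Submodule ℚ (MvPolynomial ℕ ℚ) :=
  ⨆ q : SIdx n I, IndVSh t n q.1.1 q.1.2 (hSI n I q.1.2)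

/-- `Ext R_{n,I}`, applied summand-by-summand. -/
def ExtR (n : ℕ) (I : Finset ℕ) : Submodule ℚ (MvPolynomial ℕ ℚ) :=
  ⨆ q : SIdx n I, ExtVSh n q.1.1 q.1.2 (hSI n I q.1.2)

/-- `Ind_t R^hom_{n,I}`, applied summand-by-summand. -/
def IndRhom (t n : ℕ) (I : Finset ℕ) : Submodule ℚ (MvPolynomial ℕ ℚ) :=
  ⨆ q : SIdx n I, IndVSh t n q.1.1 q.1.2 (hInd n I q.1.2)

/-- `Ext R^hom_{n,I}`, applied summand-by-summand. -/
def ExtRhom (n : ℕ) (I : Finset ℕ) : Submodule ℚ (MvPolynomial ℕ ℚ) :=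
  ⨆ q : SIdx n I, ExtVSh n q.1.1 q.1.2 (hInd n I q.1.2)

/-- The lift `R̃_{n,k} = ⊕_{|I| = k-1} R_{n,I}` of the quotient `R_{n,k}`. -/
def Rtil (n k : ℕ) : Submodule ℚ (MvPolynomial ℕ ℚ) :=
  ⨆ I : Finset ℕ, ⨆ _ : I ⊆ Finset.Ioo 0 n ∧ I.card + 1 = k, RnI n I

/-! ### The extended column group -/

/-- The length of column `c` of a tableau. -/
def colLenT (n : ℕ) (T : Tab) (c : ℕ) : ℕ :=
  ((Finset.range (n + 1)).filter fun r => T (r, c) ≠ 0).card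

/-- `q_a`: the number of columns of length `> a` (columns of length `a` occupy the
`0`-indexed columns `q_a, …, q_a + t_a - 1`). -/
def qaT (n : ℕ) (T : Tab) (a : ℕ) : ℕ :=
  ((Finset.range (n + 1)).filter fun c => a < colLenT n T c).card

/-- `t_a`: the number of columns of length `a`. -/
def taT (n : ℕ) (T : Tab) (a : ℕ) : ℕ :=
  ((Finset.range (n + 1)).filter fun c => colLenT n T c = a).card

/-- The function underlying the permutation `η_T`: the entry in row `j` of column `q_a + i`
is sent to the entry in row `j` of column `q_a + η(i)`; everything else is fixed. -/
def etaFun (n : ℕ) (T : Tab) (a : ℕ) (η : Equiv.Perm ℕ) : ℕ → ℕ := fun m =>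
  let c := colIdx T m
  if 1 ≤ m ∧ m ≤ n ∧ qaT n T a ≤ c ∧ c < qaT n T a + taT n T a then
    T (rowIdx T m, qaT n T a + η (c - qaT n T a))
  else m

/-- The set of the permutations `η_T` (over all `a ≥ 1` and all `η ∈ S_{t_a}`). -/
def etaSet (n : ℕ) (T : Tab) : Set (Equiv.Perm ℕ) :=
  {w | ∃ a, 1 ≤ a ∧ ∃ η : Equiv.Perm ℕ, (∀ i, taT n T a ≤ i → η i = i) ∧
    ⇑w = etaFun n T a η}

/-- The subgroup generated by the permutations `η_T` (a copy of `Π_a S_{t_a}`). -/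
def etaSubgroup (n : ℕ) (T : Tab) : Subgroup (Equiv.Perm ℕ) :=
  Subgroup.closure (etaSet n T)

/-- The column group `C(T)` as a subgroup. -/
def colSubgroup (n : ℕ) (T : Tab) : Subgroup (Equiv.Perm ℕ) :=
  Subgroup.closure (colGroupSet n T)

/-- The extended column group `C̃(T)`, generated by `C(T)` and the `η_T`. -/
def extColSubgroup (n : ℕ) (T : Tab) : Subgroup (Equiv.Perm ℕ) :=
  Subgroup.closure (colGroupSet n T ∪ etaSet n T)

/-- The sign of a permutation of `ℕ` supported on `{1, …, n}`. -/
def signOn (n : ℕ) (σ : Equiv.Perm ℕ) : ℤ :=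
  if h : ∃ τ : Equiv.Perm (Fin n), embedPerm n τ = σ then
    (Equiv.Perm.sign h.choose : ℤ) else 0

/-! ### Semistandard tableaux, (generalized) cocharge tableaux -/

/-- A semistandard filling of the given cells: rows weakly increase, columns strictly
increase (entries outside the cells are normalized to `0`). -/
def IsSSYTOn (cells : Finset (ℕ × ℕ)) (C : Tab) : Prop :=
  (∀ c ∉ cells, C c = 0) ∧
  (∀ c₁ ∈ cells, ∀ c₂ ∈ cells, c₁.1 = c₂.1 → c₁.2 ≤ c₂.2 → C c₁ ≤ C c₂) ∧
  (∀ c₁ ∈ cells, ∀ c₂ ∈ cells, c₁.2 = c₂.2 → c₁.1 < c₂.1 → C c₁ < C c₂)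

/-- A generalized cocharge tableau with entries exactly `{0, …, k-1}`. -/
def IsGCT (cells : Finset (ℕ × ℕ)) (C : Tab) (k : ℕ) : Prop :=
  IsSSYTOn cells C ∧ (∀ c ∈ cells, C c < k) ∧ ∀ h < k, ∃ c ∈ cells, C c = h

/-- The type of a generalized cocharge tableau: the set of cumulative multiplicities
`#{c : C c < h}` for `1 ≤ h ≤ k - 1`. -/
def gctType (cells : Finset (ℕ × ℕ)) (C : Tab) (k : ℕ) : Finset ℕ :=
  (Finset.Ico 1 k).image fun h => (cells.filter fun c => C c < h).card

/-- The standardization of a semistandard tableau: entries are replaced by `1, …, n`,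
processing the values in increasing order and, for equal values, from left to right. -/
def stdz (cells : Finset (ℕ × ℕ)) (C : Tab) : Tab := fun c =>
  if c ∈ cells then
    (cells.filter fun c' => C c' < C c ∨
      (C c' = C c ∧ (c'.2 < c.2 ∨ (c'.2 = c.2 ∧ c'.1 ≤ c.1)))).card
  else 0

/-- A cocharge tableau of shape `μ`: one of the form `ct S` for a standard `S`. -/
def IsCCT (μ : YoungDiagram) (C : Tab) : Prop :=
  ∃ S : Tab, IsStandard μ S ∧ ctTab μ.cells.card S = C

/-- `k` for a tableau: one more than the maximal entry. -/
def kOf (cells : Finset (ℕ × ℕ)) (C : Tab) : ℕ := cells.sup C + 1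

/-- `Dsp^c(C) := {n - i : i ∈ J}`, `J` the type of the cocharge tableau `C`. -/
def Dspc (n : ℕ) (cells : Finset (ℕ × ℕ)) (C : Tab) : Finset ℕ :=
  (gctType cells C (kOf cells C)).image fun i => n - i

/-- The entry sum `Σ(C)`. -/
def entrySum (cells : Finset (ℕ × ℕ)) (C : Tab) : ℕ := ∑ c ∈ cells, C c

/-- `C +̂ v := ct (ct⁻¹(C) +̃ v)`, where `ct⁻¹` is the standardization. -/
def Cadd (n : ℕ) (μ : YoungDiagram) (C : Tab) (v : ℕ × ℕ) : Tab :=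
  ctTab (n + 1) (Sadd n (stdz μ.cells C) v)

/-- The standard Young tableau `S⁰` of shape `μ` filling the rows consecutively. -/
def rowWordTab (μ : YoungDiagram) : Tab := fun c =>
  if c ∈ μ.cells then (∑ r ∈ Finset.range c.1, μ.rowLen r) + c.2 + 1 else 0

/-- The word of an ordered set partition: the blocks listed in order, each sorted
increasingly. -/
def opWord (k : ℕ) (B : ℕ → Finset ℕ) : List ℕ :=
  (List.range k).foldr (fun h acc => (B h).sort (· ≤ ·) ++ acc) []

/-- Renaming the variables of a power series along a permutation. -/
def permSeries (g : Equiv.Perm ℕ) (F : MvPowerSeries ℕ ℚ) : MvPowerSeries ℕ ℚ :=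
  fun m => F (Finsupp.mapDomain ⇑g⁻¹ m)


/-! ### Auxiliary lemmas for Statement 16 -/

section Aux16

lemma IsFillingF.posOf_eq {cells : Finset (ℕ × ℕ)} {T : Tab} (hT : IsFillingF cells T)
    {c : ℕ × ℕ} (hc : c ∈ cells) : posOf T (T c) = c := by
  have h0 : T c ∈ Set.Icc 1 cells.card := hT.2.1 hc
  have h1 : 1 ≤ T c := h0.1
  have huniq : ∀ c', T c' = T c → c' = c := by
    intro c' h
    by_cases hc' : c' ∈ cells
    · exact hT.2.2.1 hc' hc h
    · exfalso; have := hT.1 c' hc'; omega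
  have hrow : rowIdx T (T c) = c.1 := by
    have hset : {r | ∃ c2, T (r, c2) = T c} = {c.1} := by
      ext r
      simp only [Set.mem_setOf_eq, Set.mem_singleton_iff]
      constructor
      · rintro ⟨c2, hc2⟩
        exact congrArg Prod.fst (huniq (r, c2) hc2)
      · rintro rfl
        exact ⟨c.2, by rw [Prod.mk.eta]⟩
    rw [rowIdx, hset, csInf_singleton]
  have hcol : colIdx T (T c) = c.2 := by
    have hset : {c2 | T (rowIdx T (T c), c2) = T c} = {c.2} := by
      rw [hrow]; ext c2
      simp only [Set.mem_setOf_eq, Set.mem_singleton_iff]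
      constructor
      · intro hc2; exact congrArg Prod.snd (huniq (c.1, c2) hc2)
      · rintro rfl; rw [Prod.mk.eta]
    rw [colIdx, hset, csInf_singleton]
  rw [posOf, hrow, hcol]

lemma IsFillingF.exists_cell {cells : Finset (ℕ × ℕ)} {T : Tab} (hT : IsFillingF cells T)
    {i : ℕ} (hi : i ∈ Finset.Icc 1 cells.card) : ∃ c ∈ cells, T c = i := by
  obtain ⟨c, hc, hci⟩ := hT.2.2.2 (Set.mem_Icc.2 (Finset.mem_Icc.1 hi))
  exact ⟨c, hc, hci⟩

lemma IsFillingF.posOf_mem {cells : Finset (ℕ × ℕ)} {T : Tab} (hT : IsFillingF cells T)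
    {i : ℕ} (hi : i ∈ Finset.Icc 1 cells.card) :
    posOf T i ∈ cells ∧ T (posOf T i) = i := by
  obtain ⟨c, hc, rfl⟩ := hT.exists_cell hi
  rw [hT.posOf_eq hc]; exact ⟨hc, rfl⟩

lemma IsFillingF.posOf_inj {cells : Finset (ℕ × ℕ)} {T : Tab} (hT : IsFillingF cells T)
    {i j : ℕ} (hi : i ∈ Finset.Icc 1 cells.card) (hj : j ∈ Finset.Icc 1 cells.card)
    (hij : posOf T i = posOf T j) : i = j := by
  have h1 := (hT.posOf_mem hi).2
  have h2 := (hT.posOf_mem hj).2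
  rw [hij] at h1
  rw [← h1, h2]

lemma IsFillingF.sum_posOf {cells : Finset (ℕ × ℕ)} {T : Tab} (hT : IsFillingF cells T)
    (f : ℕ × ℕ → ℕ) : ∑ i ∈ Finset.Icc 1 cells.card, f (posOf T i) = ∑ c ∈ cells, f c := by
  refine Finset.sum_nbij' (i := fun i => posOf T i) (j := fun c => T c) ?_ ?_ ?_ ?_ ?_
  · intro a ha; exact (hT.posOf_mem ha).1
  · intro c hc; exact Finset.mem_Icc.2 (Set.mem_Icc.1 (hT.2.1 hc))
  · intro a ha; exact (hT.posOf_mem ha).2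
  · intro c hc; exact hT.posOf_eq hc
  · intro a _; rfl

lemma embedPerm_apply_not_mem (n : ℕ) (σ : Equiv.Perm (Fin n)) {i : ℕ}
    (hi : i ∉ Finset.Icc 1 n) : embedPerm n σ i = i := by
  apply Equiv.Perm.extendDomain_apply_not_subtype
  rw [Finset.mem_Icc] at hi
  exact fun h => hi ⟨h.1, h.2⟩

lemma embedPerm_apply_mem (n : ℕ) (σ : Equiv.Perm (Fin n)) {i : ℕ}
    (hi : i ∈ Finset.Icc 1 n) : embedPerm n σ i ∈ Finset.Icc 1 n := by
  rw [Finset.mem_Icc] at hi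
  have h2 : embedPerm n σ i = (finShift n (σ ((finShift n).symm ⟨i, hi⟩)) : ℕ) :=
    Equiv.Perm.extendDomain_apply_subtype (p := fun j => 1 ≤ j ∧ j ≤ n) σ (finShift n) hi
  rw [h2]
  exact Finset.mem_Icc.2 (finShift n (σ ((finShift n).symm ⟨i, hi⟩))).2

lemma embedPerm_one (n : ℕ) : embedPerm n 1 = 1 :=
  Equiv.Perm.extendDomain_one _

lemma embedPerm_mul (n : ℕ) (σ τ : Equiv.Perm (Fin n)) :
    embedPerm n (σ * τ) = embedPerm n σ * embedPerm n τ :=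
  (Equiv.Perm.extendDomain_mul _ σ τ).symm

lemma embedPerm_inv (n : ℕ) (σ : Equiv.Perm (Fin n)) :
    embedPerm n σ⁻¹ = (embedPerm n σ)⁻¹ :=
  (Equiv.Perm.extendDomain_inv _ _).symm

lemma rowFinset_one (n : ℕ) (T : Tab) : (1 : Equiv.Perm (Fin n)) ∈ rowFinset n T := by
  simp only [rowFinset, Finset.mem_filter, Finset.mem_univ, true_and]
  exact fun i _ => by rw [embedPerm_one]; rfl

lemma rowFinset_mul {n : ℕ} {T : Tab} {τ₁ τ₂ : Equiv.Perm (Fin n)}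
    (h1 : τ₁ ∈ rowFinset n T) (h2 : τ₂ ∈ rowFinset n T) : τ₁ * τ₂ ∈ rowFinset n T := by
  simp only [rowFinset, Finset.mem_filter, Finset.mem_univ, true_and] at h1 h2 ⊢
  intro i hi
  rw [embedPerm_mul, Equiv.Perm.mul_apply]
  rw [h1 _ (embedPerm_apply_mem n τ₂ hi), h2 _ hi]

lemma rowFinset_inv {n : ℕ} {T : Tab} {τ : Equiv.Perm (Fin n)}
    (h : τ ∈ rowFinset n T) : τ⁻¹ ∈ rowFinset n T := by
  simp only [rowFinset, Finset.mem_filter, Finset.mem_univ, true_and] at h ⊢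
  intro i hi
  have hj : embedPerm n τ⁻¹ i ∈ Finset.Icc 1 n := embedPerm_apply_mem n τ⁻¹ hi
  have := h _ hj
  rw [embedPerm_inv] at hj ⊢
  rw [embedPerm_inv, show ∀ x, embedPerm n τ ((embedPerm n τ)⁻¹ x) = x from Equiv.apply_symm_apply _] at this
  exact this.symm

lemma SuppIn.mem_Icc {n : ℕ} {σ : Equiv.Perm ℕ} (hσ : SuppIn n σ) {i : ℕ}
    (hi : i ∈ Finset.Icc 1 n) : σ i ∈ Finset.Icc 1 n := by
  rw [Finset.mem_Icc] at hi ⊢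
  by_contra hc
  have h0 : σ i = 0 ∨ n < σ i := by omega
  have h1 : σ (σ i) = σ i := hσ (σ i) h0
  have h2 : σ i = i := σ.injective h1
  omega

lemma SuppIn.inv {n : ℕ} {σ : Equiv.Perm ℕ} (hσ : SuppIn n σ) : SuppIn n σ⁻¹ := by
  intro i hi
  have h := hσ i hi
  calc σ⁻¹ i = σ⁻¹ (σ i) := by rw [h]
  _ = i := σ.symm_apply_apply i

lemma prod_monomial_one {α : Type*} (s : Finset α) (g : α → (ℕ →₀ ℕ)) :
    ∏ i ∈ s, (monomial (g i) (1 : ℚ)) = monomial (∑ i ∈ s, g i) 1 := by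
  classical
  induction s using Finset.induction with
  | empty => simp [monomial_zero']
  | insert a s h ih =>
      rw [Finset.prod_insert h, Finset.sum_insert h, ih, monomial_mul, one_mul]

lemma mapDomain_perm_apply (g : Equiv.Perm ℕ) (d : ℕ →₀ ℕ) (k : ℕ) :
    Finsupp.mapDomain (⇑g) d k = d (g⁻¹ k) := by
  rw [show ((g⁻¹ : Equiv.Perm ℕ) : ℕ → ℕ) = ⇑(g : ℕ ≃ ℕ).symm from rfl]
  exact Finsupp.mapDomain_equiv_apply d k

lemma mapDomain_perm_mul (g₁ g₂ : Equiv.Perm ℕ) (d : ℕ →₀ ℕ) :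
    Finsupp.mapDomain (⇑(g₁ * g₂)) d =
      Finsupp.mapDomain ⇑g₁ (Finsupp.mapDomain ⇑g₂ d) := by
  rw [← Finsupp.mapDomain_comp]; rfl

lemma mapDomain_perm_inv_cancel (g : Equiv.Perm ℕ) (d : ℕ →₀ ℕ) :
    Finsupp.mapDomain ⇑g⁻¹ (Finsupp.mapDomain ⇑g d) = d := by
  rw [← mapDomain_perm_mul, inv_mul_cancel]
  simp [Finsupp.mapDomain_id]

lemma row_orbit_count (n : ℕ) (T : Tab) (d m : ℕ →₀ ℕ) :
    ((rowFinset n T).filter fun τ => Finsupp.mapDomain (⇑(embedPerm n τ)) d = m).card = 0 ∨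
    ((rowFinset n T).filter fun τ => Finsupp.mapDomain (⇑(embedPerm n τ)) d = m).card =
    ((rowFinset n T).filter fun τ => Finsupp.mapDomain (⇑(embedPerm n τ)) d = d).card := by
  rcases Finset.eq_empty_or_nonempty
      ((rowFinset n T).filter fun τ => Finsupp.mapDomain (⇑(embedPerm n τ)) d = m) with he | hne
  · left; rw [he]; rfl
  · right
    obtain ⟨τ₀, hτ₀⟩ := hne
    rw [Finset.mem_filter] at hτ₀
    refine Finset.card_nbij' (i := fun τ => τ₀⁻¹ * τ) (j := fun τ => τ₀ * τ) ?_ ?_ ?_ ?_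
    · intro τ hτ
      rw [Finset.mem_coe, Finset.mem_filter] at hτ ⊢
      refine ⟨rowFinset_mul (rowFinset_inv hτ₀.1) hτ.1, ?_⟩
      rw [embedPerm_mul, embedPerm_inv, mapDomain_perm_mul, hτ.2, ← hτ₀.2,
        mapDomain_perm_inv_cancel]
    · intro τ hτ
      rw [Finset.mem_coe, Finset.mem_filter] at hτ ⊢
      refine ⟨rowFinset_mul hτ₀.1 hτ.1, ?_⟩
      rw [embedPerm_mul, mapDomain_perm_mul, hτ.2, ← hτ₀.2]
    · intro τ _; group
    · intro τ _; group

lemma ct_strict_col {μ : YoungDiagram} {S : Tab} {n : ℕ} (hμ : μ.cells.card = n)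
    (hS : IsStandard μ S) {p q : ℕ × ℕ} (hp : p ∈ μ.cells) (hq : q ∈ μ.cells)
    (hcol : p.2 = q.2) (hrow : p.1 < q.1) :
    ctEntry S (DsiSet n S) p < ctEntry S (DsiSet n S) q := by
  have hfill : IsFillingF μ.cells S := hS.1
  have hne : p ≠ q := by intro h; rw [h] at hrow; exact lt_irrefl _ hrow
  have hab : S p < S q := hS.2 p hp q hq hne hrow.le hcol.le
  have hpa : posOf S (S p) = p := hfill.posOf_eq hp
  have hqb : posOf S (S q) = q := hfill.posOf_eq hq
  have hamem : S p ∈ Finset.Icc 1 μ.cells.card :=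
    Finset.mem_Icc.2 (Set.mem_Icc.1 (hfill.2.1 hp))
  have hbmem : S q ∈ Finset.Icc 1 μ.cells.card :=
    Finset.mem_Icc.2 (Set.mem_Icc.1 (hfill.2.1 hq))
  rw [Finset.mem_Icc] at hamem hbmem
  have hra : rowIdx S (S p) = p.1 := congrArg Prod.fst hpa
  have hrb : rowIdx S (S q) = q.1 := congrArg Prod.fst hqb
  have hdesc : ∃ j, S p ≤ j ∧ j < S q ∧ rowIdx S j < rowIdx S (j + 1) := by
    by_contra hcon
    push_neg at hcon
    have hchain : ∀ k, S p + k ≤ S q → rowIdx S (S p + k) ≤ p.1 := by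
      intro k
      induction k with
      | zero => intro _; simp [hra]
      | succ k ih =>
          intro hk
          have h1 : S p + k < S q := by omega
          have h2 := hcon (S p + k) (by omega) h1
          have h3 : rowIdx S (S p + (k + 1)) ≤ rowIdx S (S p + k) := by
            rw [show S p + (k + 1) = S p + k + 1 by omega]; exact h2
          exact le_trans h3 (ih (by omega))
    have h3 : rowIdx S (S q) ≤ p.1 := by
      have := hchain (S q - S p) (by omega)
      rwa [Nat.add_sub_cancel' (le_of_lt hab)] at this
    omega
  obtain ⟨j, hja, hjb, hjd⟩ := hdesc
  have hjmem : j ∈ DsiSet n S := by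
    rw [DsiSet, Finset.mem_filter, Finset.mem_Ioo]
    refine ⟨⟨by omega, by omega⟩, hjd⟩
  rw [ctEntry, ctEntry]
  apply Finset.card_lt_card
  rw [Finset.ssubset_def]
  constructor
  · intro x hx
    rw [Finset.mem_filter] at hx ⊢
    exact ⟨hx.1, lt_trans hx.2 hab⟩
  · intro hsub
    have hj1 : j ∈ (DsiSet n S).filter (fun x => x < S q) :=
      Finset.mem_filter.2 ⟨hjmem, hjb⟩
    have := hsub hj1
    rw [Finset.mem_filter] at this
    omega

end Aux16

/-- `(1/s_T^S) Σ_{τ ∈ R(T)} τ p_T^S` is a sum of pairwise distinct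
monomials with coefficient exactly `1`, all of degree `cc(S)` and with the same multiset of
exponents as `p_T^S`; `p_T^S` is among them; and no other monomial of the sum lies in the
`C(T)`-orbit of `p_T^S`. -/
theorem statement_16 (n : ℕ) (μ : YoungDiagram) (hμ : μ.cells.card = n) (S T : Tab)
    (hS : IsStandard μ S) (hT : IsFilling μ T) :
    let G : MvPolynomial ℕ ℚ :=
      ((sTS n T S : ℚ)⁻¹) • ∑ τ ∈ rowFinset n T, rename (⇑(embedPerm n τ)) (pTS n T S)
    (∀ m : ℕ →₀ ℕ, G.coeff m = 0 ∨ G.coeff m = 1) ∧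
    G.IsHomogeneous (ccStat n S) ∧
    (∀ m mp : ℕ →₀ ℕ, G.coeff m ≠ 0 → (monomial mp (1 : ℚ)) = pTS n T S →
      (Finset.Icc 1 n).val.map m = (Finset.Icc 1 n).val.map mp) ∧
    (∀ mp : ℕ →₀ ℕ, (monomial mp (1 : ℚ)) = pTS n T S → G.coeff mp = 1) ∧
    (∀ σ : Equiv.Perm ℕ, σ ∈ colGroupSet n T → ∀ m : ℕ →₀ ℕ,
      rename (⇑σ) (pTS n T S) = monomial m 1 → G.coeff m ≠ 0 →
      (monomial m (1 : ℚ)) = pTS n T S) := by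
  intro G
  classical
  have hTf : IsFillingF μ.cells T := hT
  have hSf : IsFillingF μ.cells S := hS.1
  have hI : ∀ {i : ℕ}, i ∈ Finset.Icc 1 n → i ∈ Finset.Icc 1 μ.cells.card := by
    intro i hi; rwa [hμ]
  set d : ℕ →₀ ℕ :=
    ∑ i ∈ Finset.Icc 1 n, Finsupp.single i (ctEntry S (DsiSet n S) (posOf T i)) with hd
  have hpTS : pTS n T S = monomial d 1 := by
    rw [hd]
    unfold pTS
    rw [← prod_monomial_one]
    exact Finset.prod_congr rfl fun i _ => X_pow_eq_monomial
  have hd_apply : ∀ j, d j =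
      if j ∈ Finset.Icc 1 n then ctEntry S (DsiSet n S) (posOf T j) else 0 := by
    intro j
    rw [hd, Finset.sum_apply']
    simp only [Finsupp.single_apply]
    rw [Finset.sum_ite_eq']
  have hcount : ∀ m : ℕ →₀ ℕ,
      (∑ τ ∈ rowFinset n T, rename (⇑(embedPerm n τ)) (pTS n T S)).coeff m =
      (((rowFinset n T).filter fun τ =>
        Finsupp.mapDomain (⇑(embedPerm n τ)) d = m).card : ℚ) := by
    intro m
    simp only [hpTS, rename_monomial, MvPolynomial.coeff_sum, coeff_monomial]
    rw [Finset.sum_boole]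
  have hstabnat : sTS n T S = ((rowFinset n T).filter fun τ =>
      Finsupp.mapDomain (⇑(embedPerm n τ)) d = d).card := by
    unfold sTS
    congr 1
    apply Finset.filter_congr
    intro τ _
    simp only [hpTS, rename_monomial, eq_iff_iff]
    constructor
    · intro hh; exact monomial_left_injective one_ne_zero hh
    · intro hh; rw [hh]
  have hstabne : sTS n T S ≠ 0 := by
    rw [hstabnat]
    apply Finset.card_ne_zero_of_mem (a := (1 : Equiv.Perm (Fin n)))
    simp only [Finset.mem_filter]
    refine ⟨rowFinset_one n T, ?_⟩
    rw [embedPerm_one]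
    simp [Finsupp.mapDomain_id]
  have hsQ : ((sTS n T S : ℚ)) ≠ 0 := Nat.cast_ne_zero.2 hstabne
  have hGdef : G = ((sTS n T S : ℚ)⁻¹) •
      ∑ τ ∈ rowFinset n T, rename (⇑(embedPerm n τ)) (pTS n T S) := rfl
  have hGcoeff : ∀ m : ℕ →₀ ℕ, G.coeff m = (sTS n T S : ℚ)⁻¹ *
      (((rowFinset n T).filter fun τ =>
        Finsupp.mapDomain (⇑(embedPerm n τ)) d = m).card : ℚ) := by
    intro m
    rw [hGdef, MvPolynomial.coeff_smul, hcount m, smul_eq_mul]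
  have hexists : ∀ m : ℕ →₀ ℕ, G.coeff m ≠ 0 →
      ∃ τ ∈ rowFinset n T, Finsupp.mapDomain (⇑(embedPerm n τ)) d = m := by
    intro m hm
    by_contra hc
    push_neg at hc
    have hemp : ((rowFinset n T).filter fun τ =>
        Finsupp.mapDomain (⇑(embedPerm n τ)) d = m) = ∅ :=
      Finset.filter_eq_empty_iff.2 (fun τ hτ => hc τ hτ)
    rw [hGcoeff, hemp] at hm
    simp at hm
  have hcc : ccStat n S = ∑ i ∈ Finset.Icc 1 n, ctEntry S (DsiSet n S) (posOf T i) := by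
    have h1 := hSf.sum_posOf (fun c => ctEntry S (DsiSet n S) c)
    have h2 := hTf.sum_posOf (fun c => ctEntry S (DsiSet n S) c)
    rw [hμ] at h1 h2
    unfold ccStat
    rw [h1, ← h2]
  have hGhom : G.IsHomogeneous (ccStat n S) := by
    have hphom : (pTS n T S).IsHomogeneous (ccStat n S) := by
      rw [hcc]
      unfold pTS
      exact MvPolynomial.IsHomogeneous.prod _ _ _
        (fun i _ => isHomogeneous_X_pow i (ctEntry S (DsiSet n S) (posOf T i)))
    have hsum : (∑ τ ∈ rowFinset n T,
        rename (⇑(embedPerm n τ)) (pTS n T S)).IsHomogeneous (ccStat n S) :=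
      MvPolynomial.IsHomogeneous.sum _ _ _
        (fun τ _ => MvPolynomial.IsHomogeneous.rename_isHomogeneous hphom)
    rw [hGdef]
    rw [← mem_homogeneousSubmodule] at hsum ⊢
    exact Submodule.smul_mem _ _ hsum
  refine ⟨?_, hGhom, ?_, ?_, ?_⟩
  · -- coefficients are 0 or 1
    intro m
    rcases row_orbit_count n T d m with h0 | hs
    · left; rw [hGcoeff, h0]; simp
    · right; rw [hGcoeff, hs, ← hstabnat]
      exact inv_mul_cancel₀ hsQ
  · -- same multiset of exponents
    intro m mp hm hmp
    have hmp' : mp = d := monomial_left_injective one_ne_zero (hmp.trans hpTS)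
    subst hmp'
    obtain ⟨τ, hτR, hτm⟩ := hexists m hm
    have hmk : ∀ k, m k = d ((embedPerm n τ)⁻¹ k) := by
      intro k; rw [← hτm, mapDomain_perm_apply]
    have hIccmap : Finset.map ⟨⇑(embedPerm n τ)⁻¹, (embedPerm n τ)⁻¹.injective⟩
        (Finset.Icc 1 n) = Finset.Icc 1 n := by
      apply Finset.eq_of_subset_of_card_le
      · intro k hk
        rw [Finset.mem_map] at hk
        obtain ⟨a, ha, rfl⟩ := hk
        simp only [Function.Embedding.coeFn_mk]
        rw [← embedPerm_inv]
        exact embedPerm_apply_mem n τ⁻¹ ha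
      · rw [Finset.card_map]
    calc (Finset.Icc 1 n).val.map ⇑m
        = (Finset.Icc 1 n).val.map (fun k => d ((embedPerm n τ)⁻¹ k)) :=
          Multiset.map_congr rfl (fun k _ => hmk k)
      _ = ((Finset.Icc 1 n).val.map ⇑(embedPerm n τ)⁻¹).map ⇑d := by
          rw [Multiset.map_map]; rfl
      _ = (Finset.map ⟨⇑(embedPerm n τ)⁻¹, (embedPerm n τ)⁻¹.injective⟩
            (Finset.Icc 1 n)).val.map ⇑d := by
          rw [Finset.map_val]
          rfl
      _ = (Finset.Icc 1 n).val.map ⇑d := by rw [hIccmap]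
  · -- the coefficient of pTS itself is 1
    intro mp hmp
    have hmp' : mp = d := monomial_left_injective one_ne_zero (hmp.trans hpTS)
    subst hmp'
    rw [hGcoeff, ← hstabnat]
    exact inv_mul_cancel₀ hsQ
  · -- no other monomial is in the C(T)-orbit of pTS
    intro σ hσ m hren hm
    have hσ' : SuppIn n σ ∧ ∀ i ∈ Finset.Icc 1 n, colIdx T (σ i) = colIdx T i := hσ
    obtain ⟨hσsupp, hσcol⟩ := hσ'
    obtain ⟨τ, hτR, hτm⟩ := hexists m hm
    rw [hpTS, rename_monomial] at hren
    have hmσ : Finsupp.mapDomain (⇑σ) d = m := monomial_left_injective one_ne_zero hren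
    have hσisupp : SuppIn n σ⁻¹ := hσsupp.inv
    have hσmem : ∀ i ∈ Finset.Icc 1 n, σ⁻¹ i ∈ Finset.Icc 1 n :=
      fun i hi => hσisupp.mem_Icc hi
    have hσcol' : ∀ i ∈ Finset.Icc 1 n, colIdx T (σ⁻¹ i) = colIdx T i := by
      intro i hi
      have h1 := hσcol _ (hσmem i hi)
      rw [show ∀ x, σ (σ⁻¹ x) = x from Equiv.apply_symm_apply σ] at h1
      exact h1.symm
    have hτinv := rowFinset_inv hτR
    simp only [rowFinset, Finset.mem_filter, Finset.mem_univ, true_and] at hτR hτinv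
    have hρrow : ∀ i ∈ Finset.Icc 1 n, rowIdx T (embedPerm n τ i) = rowIdx T i := hτR
    have hρrowinv : ∀ i ∈ Finset.Icc 1 n,
        rowIdx T ((embedPerm n τ)⁻¹ i) = rowIdx T i := by
      intro i hi; rw [← embedPerm_inv]; exact hτinv i hi
    have hρmem : ∀ i ∈ Finset.Icc 1 n, embedPerm n τ i ∈ Finset.Icc 1 n :=
      fun i hi => embedPerm_apply_mem n τ hi
    have hρmeminv : ∀ i ∈ Finset.Icc 1 n, (embedPerm n τ)⁻¹ i ∈ Finset.Icc 1 n := by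
      intro i hi; rw [← embedPerm_inv]; exact embedPerm_apply_mem n τ⁻¹ hi
    have hm1 : ∀ k, d (σ⁻¹ k) = m k := by
      intro k; rw [← hmσ, mapDomain_perm_apply]
    have hm2 : ∀ k, d ((embedPerm n τ)⁻¹ k) = m k := by
      intro k; rw [← hτm, mapDomain_perm_apply]
    have hinj : ∀ i ∈ Finset.Icc 1 n, ∀ j ∈ Finset.Icc 1 n,
        posOf T i = posOf T j → i = j :=
      fun i hi j hj h => hTf.posOf_inj (hI hi) (hI hj) h
    have hstrict : ∀ i ∈ Finset.Icc 1 n, ∀ j ∈ Finset.Icc 1 n, colIdx T i = colIdx T j →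
        rowIdx T i < rowIdx T j → d i < d j := by
      intro i hi j hj hc hr
      rw [hd_apply i, hd_apply j, if_pos hi, if_pos hj]
      exact ct_strict_col hμ hS (hTf.posOf_mem (hI hi)).1 (hTf.posOf_mem (hI hj)).1 hc hr
    have key : ∀ r : ℕ, ∀ j ∈ Finset.Icc 1 n, rowIdx T j < r → σ⁻¹ j = j := by
      intro r
      induction r with
      | zero => exact fun j _ h => absurd h (Nat.not_lt_zero _)
      | succ r ih =>
        have hrowge : ∀ i ∈ Finset.Icc 1 n, rowIdx T i = r → σ⁻¹ i ≠ i →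
            r < rowIdx T (σ⁻¹ i) := by
          intro i hiI hir hne
          have hiv : σ⁻¹ i ∈ Finset.Icc 1 n := hσmem i hiI
          have h1 : ¬ rowIdx T (σ⁻¹ i) < r := by
            intro hlt
            exact hne ((Equiv.injective σ⁻¹) (ih (σ⁻¹ i) hiv hlt))
          have h2 : rowIdx T (σ⁻¹ i) ≠ r := by
            intro heq
            apply hne
            apply hinj _ hiv _ hiI
            unfold posOf
            rw [heq, hir, hσcol' i hiI]
          omega
        have hfib : ∀ i ∈ (Finset.Icc 1 n).filter (fun i => rowIdx T i = r),
            d i ≤ d (σ⁻¹ i) := by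
          intro i hi
          rw [Finset.mem_filter] at hi
          obtain ⟨hiI, hir⟩ := hi
          rcases eq_or_ne (σ⁻¹ i) i with he | hne
          · rw [he]
          · refine le_of_lt (hstrict i hiI (σ⁻¹ i) (hσmem i hiI)
              (hσcol' i hiI).symm ?_)
            rw [hir]
            exact hrowge i hiI hir hne
        have hsum : ∑ i ∈ (Finset.Icc 1 n).filter (fun i => rowIdx T i = r), d i
            = ∑ i ∈ (Finset.Icc 1 n).filter (fun i => rowIdx T i = r), d (σ⁻¹ i) := by
          have hstep1 : ∀ k, d (σ⁻¹ k) = d ((embedPerm n τ)⁻¹ k) := by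
            intro k; rw [hm1 k, ← hm2 k]
          rw [Finset.sum_congr rfl (fun i (_ : i ∈ _) => hstep1 i)]
          symm
          refine Finset.sum_nbij' (i := fun i => (embedPerm n τ)⁻¹ i)
            (j := fun i => embedPerm n τ i) ?_ ?_ ?_ ?_ ?_
          · intro a ha
            rw [Finset.mem_filter] at ha ⊢
            exact ⟨hρmeminv a ha.1, by rw [hρrowinv a ha.1]; exact ha.2⟩
          · intro a ha
            rw [Finset.mem_filter] at ha ⊢
            exact ⟨hρmem a ha.1, by rw [hρrow a ha.1]; exact ha.2⟩
          · intro a _; exact Equiv.apply_symm_apply _ _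
          · intro a _; exact Equiv.symm_apply_apply _ _
          · intro a _; rfl
        have heq := (Finset.sum_eq_sum_iff_of_le hfib).1 hsum
        intro j hj hjr
        rcases Nat.lt_succ_iff_lt_or_eq.1 hjr with h | h
        · exact ih j hj h
        · by_contra hne
          have hdeq : d j = d (σ⁻¹ j) := heq j (Finset.mem_filter.2 ⟨hj, h⟩)
          have hlt : d j < d (σ⁻¹ j) := by
            refine hstrict j hj (σ⁻¹ j) (hσmem j hj) (hσcol' j hj).symm ?_
            rw [h]
            exact hrowge j hj h hne
          omega
    have hfix : ∀ k, σ⁻¹ k = k := by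
      intro k
      by_cases hk : k ∈ Finset.Icc 1 n
      · exact key (rowIdx T k + 1) k hk (Nat.lt_succ_self _)
      · rw [Finset.mem_Icc] at hk
        exact hσisupp k (by omega)
    have hmd : m = d := by
      ext k
      rw [← hm1 k, hfix k]
    rw [hmd, hpTS]

end HigherSpecht
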